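/- arXiv:1412.4430 — 5 statements merged into one kernel-verified Lean document; each statement's English description precedes it below -/
import Mathlib

section
/- Let μ and ν be Borel probability measures on ℝⁿ, and let P be a Borel probability measure on C([0,1], ℝⁿ) such that the pushforwards of P under the evaluation maps γ ↦ γ(0) and γ ↦ γ(1) equal μ and ν respectively, and such that P-almost every path is continuously differentiable with finite kinetic energy. Then ∫ (∫_0^1 (1/2)‖γ'(t)‖² dt) dP(γ) ≥ inf over all couplings π of μ and ν of ∫_{ℝⁿ×ℝⁿ} (1/2)‖x − y‖² dπ(x,y). -/
open MeasureTheory Set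
open scoped ENNReal

/-- The Borel σ-algebra on the space `C([0,1], ℝⁿ)` of continuous paths (whose topology,
for a compact time interval, is that of the supremum metric). -/
noncomputable instance pathSpaceMeasurableSpace (n : ℕ) (t₀ t₁ : ℝ) :
    MeasurableSpace C(Set.Icc t₀ t₁, EuclideanSpace ℝ (Fin n)) := borel _

instance pathSpaceBorelSpace (n : ℕ) (t₀ t₁ : ℝ) :
    BorelSpace C(Set.Icc t₀ t₁, EuclideanSpace ℝ (Fin n)) := ⟨rfl⟩

/-- A path `γ ∈ C([t₀,t₁], ℝⁿ)` is continuously differentiable if its extension to `ℝ`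
(constant outside `[t₀,t₁]`) is `C¹` on `[t₀,t₁]`. -/
def IsC1Path {n : ℕ} {t₀ t₁ : ℝ} (h : t₀ ≤ t₁)
    (γ : C(Set.Icc t₀ t₁, EuclideanSpace ℝ (Fin n))) : Prop :=
  ContDiffOn ℝ 1 (Set.IccExtend h γ) (Set.Icc t₀ t₁)

/-- The kinetic energy `∫_{t₀}^{t₁} (1/2)‖γ'(t)‖² dt` of a path `γ ∈ C([t₀,t₁], ℝⁿ)`. -/
noncomputable def pathKE {n : ℕ} {t₀ t₁ : ℝ} (h : t₀ ≤ t₁)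
    (γ : C(Set.Icc t₀ t₁, EuclideanSpace ℝ (Fin n))) : ℝ :=
  ∫ t in t₀..t₁, (1 / 2) * ‖derivWithin (Set.IccExtend h γ) (Set.Icc t₀ t₁) t‖ ^ 2

/-- A path has finite kinetic energy if `t ↦ ‖γ'(t)‖²` is integrable on `[t₀,t₁]`. -/
def FiniteKE {n : ℕ} {t₀ t₁ : ℝ} (h : t₀ ≤ t₁)
    (γ : C(Set.Icc t₀ t₁, EuclideanSpace ℝ (Fin n))) : Prop :=
  IntervalIntegrable
    (fun t => ‖derivWithin (Set.IccExtend h γ) (Set.Icc t₀ t₁) t‖ ^ 2) volume t₀ t₁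

lemma key_estimate {n : ℕ} (γ : C(Set.Icc (0:ℝ) 1, EuclideanSpace ℝ (Fin n)))
    (hc : IsC1Path zero_le_one γ) :
    (1 / 2) * ‖γ ⟨1, Set.right_mem_Icc.mpr zero_le_one⟩
        - γ ⟨0, Set.left_mem_Icc.mpr zero_le_one⟩‖ ^ 2 ≤ pathKE zero_le_one γ := by
  have hconts : ContinuousOn
      (derivWithin (Set.IccExtend zero_le_one γ) (Set.Icc 0 1)) (Set.Icc 0 1) :=
    hc.continuousOn_derivWithin (uniqueDiffOn_Icc one_pos) le_rfl
  have hint : IntervalIntegrable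
      (derivWithin (Set.IccExtend zero_le_one γ) (Set.Icc 0 1)) volume 0 1 := by
    apply ContinuousOn.intervalIntegrable
    rwa [uIcc_of_le zero_le_one]
  have hftc : ∫ t in (0:ℝ)..1, derivWithin (Set.IccExtend zero_le_one γ) (Set.Icc 0 1) t
      = γ ⟨1, Set.right_mem_Icc.mpr zero_le_one⟩ - γ ⟨0, Set.left_mem_Icc.mpr zero_le_one⟩ := by
    have := intervalIntegral.integral_eq_sub_of_hasDeriv_right_of_le zero_le_one hc.continuousOn
      (f' := derivWithin (Set.IccExtend zero_le_one γ) (Set.Icc 0 1)) ?_ hint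
    · rw [this, Set.IccExtend_right, Set.IccExtend_left]
    · intro x hx
      have hmem : Set.Icc (0:ℝ) 1 ∈ nhdsWithin x (Set.Ioi x) :=
        nhdsWithin_le_nhds (Icc_mem_nhds hx.1 hx.2)
      exact ((hc.differentiableOn one_ne_zero x (Ioo_subset_Icc_self hx)).hasDerivWithinAt
        ).mono_of_mem_nhdsWithin hmem
  set g : ℝ → ℝ := fun t => ‖derivWithin (Set.IccExtend zero_le_one γ) (Set.Icc 0 1) t‖ with hg
  have hgint : IntervalIntegrable g volume 0 1 := hint.norm
  have hg2int : IntervalIntegrable (fun t => g t ^ 2) volume 0 1 := by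
    apply ContinuousOn.intervalIntegrable
    rw [uIcc_of_le zero_le_one]
    exact (hconts.norm).pow 2
  set I := ∫ t in (0:ℝ)..1, g t with hI
  have hnormle : ‖γ ⟨1, Set.right_mem_Icc.mpr zero_le_one⟩
      - γ ⟨0, Set.left_mem_Icc.mpr zero_le_one⟩‖ ≤ I := by
    rw [← hftc]
    exact intervalIntegral.norm_integral_le_integral_norm zero_le_one
  have hCS : I ^ 2 ≤ ∫ t in (0:ℝ)..1, g t ^ 2 := by
    have h0 : 0 ≤ ∫ t in (0:ℝ)..1, (g t - I) ^ 2 :=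
      intervalIntegral.integral_nonneg zero_le_one (fun t _ => sq_nonneg _)
    have hexp : ∫ t in (0:ℝ)..1, (g t - I) ^ 2
        = (∫ t in (0:ℝ)..1, g t ^ 2) - 2 * I * I + I ^ 2 := by
      have heq : (fun t => (g t - I) ^ 2) = fun t => g t ^ 2 - (2 * I) * g t + I ^ 2 := by
        funext t; ring
      rw [heq, intervalIntegral.integral_add (hg2int.sub (hgint.const_mul (2*I)))
          (intervalIntegrable_const),
        intervalIntegral.integral_sub hg2int (hgint.const_mul (2*I)),
        intervalIntegral.integral_const_mul, intervalIntegral.integral_const, ← hI]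
      simp
    nlinarith [h0, hexp]
  have hn2 : ‖γ ⟨1, Set.right_mem_Icc.mpr zero_le_one⟩
      - γ ⟨0, Set.left_mem_Icc.mpr zero_le_one⟩‖ ^ 2 ≤ ∫ t in (0:ℝ)..1, g t ^ 2 :=
    le_trans (pow_le_pow_left₀ (norm_nonneg _) hnormle 2) hCS
  have hKE : pathKE zero_le_one γ = (1/2) * ∫ t in (0:ℝ)..1, g t ^ 2 := by
    rw [pathKE, ← intervalIntegral.integral_const_mul]
  rw [hKE]
  linarith

/-- A coupling of `μ` and `ν`: a measure on the product whose marginals are `μ` and `ν`. -/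
def IsCoupling {n : ℕ}
    (π : Measure (EuclideanSpace ℝ (Fin n) × EuclideanSpace ℝ (Fin n)))
    (μ ν : Measure (EuclideanSpace ℝ (Fin n))) : Prop :=
  π.map Prod.fst = μ ∧ π.map Prod.snd = ν

/-- If `P` is a Borel probability measure on `C([0,1], ℝⁿ)` with time-`0`
marginal `μ` and time-`1` marginal `ν`, concentrated on `C¹` paths of finite kinetic energy,
then the expected kinetic energy is at least the optimal quadratic transportation cost
between `μ` and `ν`. -/
theorem expected_kinetic_energy_ge_transport_cost {n : ℕ}
    (μ ν : Measure (EuclideanSpace ℝ (Fin n)))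
    [IsProbabilityMeasure μ] [IsProbabilityMeasure ν]
    (P : Measure C(Set.Icc (0:ℝ) 1, EuclideanSpace ℝ (Fin n))) [IsProbabilityMeasure P]
    (h0 : P.map (fun γ => γ ⟨0, Set.left_mem_Icc.mpr zero_le_one⟩) = μ)
    (h1 : P.map (fun γ => γ ⟨1, Set.right_mem_Icc.mpr zero_le_one⟩) = ν)
    (hP : ∀ᵐ γ ∂P, IsC1Path zero_le_one γ ∧ FiniteKE zero_le_one γ) :
    sInf {c : ℝ≥0∞ |
        ∃ π : Measure (EuclideanSpace ℝ (Fin n) × EuclideanSpace ℝ (Fin n)),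
          IsProbabilityMeasure π ∧ IsCoupling π μ ν ∧
          c = ∫⁻ p, ENNReal.ofReal ((1 / 2) * ‖p.1 - p.2‖ ^ 2) ∂π} ≤
      ∫⁻ γ, ENNReal.ofReal (pathKE zero_le_one γ) ∂P := by
  set e : C(Set.Icc (0:ℝ) 1, EuclideanSpace ℝ (Fin n)) →
      EuclideanSpace ℝ (Fin n) × EuclideanSpace ℝ (Fin n) :=
    fun γ => (γ ⟨0, Set.left_mem_Icc.mpr zero_le_one⟩,
              γ ⟨1, Set.right_mem_Icc.mpr zero_le_one⟩) with he_def
  have hecont : Continuous e :=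
    (continuous_eval_const _).prodMk (continuous_eval_const _)
  have hemeas : Measurable e := hecont.measurable
  set π := P.map e with hπ
  have hπprob : IsProbabilityMeasure π := Measure.isProbabilityMeasure_map hemeas.aemeasurable
  have hcoup : IsCoupling π μ ν := by
    constructor
    · rw [hπ, Measure.map_map measurable_fst hemeas]
      exact h0
    · rw [hπ, Measure.map_map measurable_snd hemeas]
      exact h1
  have hcostmeas : Measurable (fun p : EuclideanSpace ℝ (Fin n) × EuclideanSpace ℝ (Fin n) =>
      ENNReal.ofReal ((1 / 2) * ‖p.1 - p.2‖ ^ 2)) := by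
    apply Measurable.ennreal_ofReal
    exact (continuous_const.mul (((continuous_fst.sub continuous_snd).norm).pow 2)).measurable
  have hπint : (∫⁻ p, ENNReal.ofReal ((1 / 2) * ‖p.1 - p.2‖ ^ 2) ∂π)
      = ∫⁻ γ, ENNReal.ofReal ((1 / 2) * ‖γ ⟨0, Set.left_mem_Icc.mpr zero_le_one⟩
          - γ ⟨1, Set.right_mem_Icc.mpr zero_le_one⟩‖ ^ 2) ∂P := by
    rw [hπ, lintegral_map hcostmeas hemeas]
  have hmono : (∫⁻ γ, ENNReal.ofReal ((1 / 2) * ‖γ ⟨0, Set.left_mem_Icc.mpr zero_le_one⟩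
          - γ ⟨1, Set.right_mem_Icc.mpr zero_le_one⟩‖ ^ 2) ∂P)
      ≤ ∫⁻ γ, ENNReal.ofReal (pathKE zero_le_one γ) ∂P := by
    apply lintegral_mono_ae
    filter_upwards [hP] with γ hγ
    apply ENNReal.ofReal_le_ofReal
    calc (1 / 2) * ‖γ ⟨0, Set.left_mem_Icc.mpr zero_le_one⟩
          - γ ⟨1, Set.right_mem_Icc.mpr zero_le_one⟩‖ ^ 2
        = (1 / 2) * ‖γ ⟨1, Set.right_mem_Icc.mpr zero_le_one⟩
          - γ ⟨0, Set.left_mem_Icc.mpr zero_le_one⟩‖ ^ 2 := by rw [norm_sub_rev]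
      _ ≤ pathKE zero_le_one γ := key_estimate γ hγ.1
  refine le_trans (sInf_le ⟨π, hπprob, hcoup, rfl⟩) ?_
  rw [hπint]
  exact hmono
end

section
/- Let μ and ν be Borel probability measures on ℝⁿ such that the infimum over couplings π of μ and ν of ∫ (1/2)‖x − y‖² dπ(x,y) is finite. Then this infimum equals the infimum, over all Borel probability measures P on C([0,1], ℝⁿ) whose pushforwards under the evaluation maps at times 0 and 1 are μ and ν respectively and which concentrate on continuously differentiable paths of finite kinetic energy, of the expected kinetic energy ∫ (∫_0^1 (1/2)‖γ'(t)‖² dt) dP(γ). -/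
open MeasureTheory Set
open scoped ENNReal

variable {n : ℕ}

noncomputable def lineCM (n : ℕ) :
    C(EuclideanSpace ℝ (Fin n) × EuclideanSpace ℝ (Fin n),
      C(Set.Icc (0:ℝ) 1, EuclideanSpace ℝ (Fin n))) :=
  ContinuousMap.curry ⟨fun q => q.1.1 + (q.2 : ℝ) • (q.1.2 - q.1.1), by fun_prop⟩

lemma lineCM_apply (p : EuclideanSpace ℝ (Fin n) × EuclideanSpace ℝ (Fin n))
    (t : Set.Icc (0:ℝ) 1) : lineCM n p t = p.1 + (t : ℝ) • (p.2 - p.1) := rfl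

lemma lineCM_extend_eqOn (p : EuclideanSpace ℝ (Fin n) × EuclideanSpace ℝ (Fin n)) :
    EqOn (Set.IccExtend zero_le_one (lineCM n p))
      (fun t : ℝ => p.1 + t • (p.2 - p.1)) (Set.Icc (0:ℝ) 1) := fun t ht => by
  rw [Set.IccExtend_of_mem _ _ ht]; rfl

lemma lineCM_isC1 (p : EuclideanSpace ℝ (Fin n) × EuclideanSpace ℝ (Fin n)) :
    IsC1Path zero_le_one (lineCM n p) := by
  have hg : ContDiff ℝ 1 (fun t : ℝ => p.1 + t • (p.2 - p.1)) :=
    contDiff_const.add (contDiff_id.smul contDiff_const)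
  exact hg.contDiffOn.congr (fun t ht => lineCM_extend_eqOn p ht)

lemma lineCM_deriv (p : EuclideanSpace ℝ (Fin n) × EuclideanSpace ℝ (Fin n))
    {t : ℝ} (ht : t ∈ Set.Icc (0:ℝ) 1) :
    derivWithin (Set.IccExtend zero_le_one (lineCM n p)) (Set.Icc (0:ℝ) 1) t = p.2 - p.1 := by
  have hu := (uniqueDiffOn_Icc (one_pos)) t ht
  rw [derivWithin_congr (lineCM_extend_eqOn p) (lineCM_extend_eqOn p ht)]
  have hd : HasDerivAt (fun t : ℝ => p.1 + t • (p.2 - p.1)) (p.2 - p.1) t := by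
    simpa using ((hasDerivAt_id t).smul_const (p.2 - p.1)).const_add p.1
  rw [hd.hasDerivWithinAt.derivWithin hu]

lemma lineCM_KE (p : EuclideanSpace ℝ (Fin n) × EuclideanSpace ℝ (Fin n)) :
    pathKE zero_le_one (lineCM n p) = (1 / 2) * ‖p.2 - p.1‖ ^ 2 := by
  unfold pathKE
  rw [intervalIntegral.integral_congr (g := fun _ => (1 / 2) * ‖p.2 - p.1‖ ^ 2)
    (fun t ht => by rw [Set.uIcc_of_le zero_le_one] at ht; rw [lineCM_deriv p ht])]
  simp

lemma IsC1Path.finiteKE {γ : C(Set.Icc (0:ℝ) 1, EuclideanSpace ℝ (Fin n))}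
    (hγ : IsC1Path zero_le_one γ) : FiniteKE zero_le_one γ := by
  have hc : ContinuousOn
      (fun t => ‖derivWithin (Set.IccExtend zero_le_one γ) (Set.Icc (0:ℝ) 1) t‖ ^ 2)
      (Set.Icc (0:ℝ) 1) :=
    (hγ.continuousOn_derivWithin (uniqueDiffOn_Icc one_pos) le_rfl).norm.pow 2
  exact ContinuousOn.intervalIntegrable (by rwa [Set.uIcc_of_le zero_le_one])

lemma KE_lowerBound {γ : C(Set.Icc (0:ℝ) 1, EuclideanSpace ℝ (Fin n))}
    (hγ : IsC1Path zero_le_one γ) :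
    (1 / 2) * ‖γ ⟨1, Set.right_mem_Icc.mpr zero_le_one⟩
        - γ ⟨0, Set.left_mem_Icc.mpr zero_le_one⟩‖ ^ 2 ≤ pathKE zero_le_one γ := by
  set f := Set.IccExtend zero_le_one γ with hf
  set f' := fun t => derivWithin f (Set.Icc (0:ℝ) 1) t with hf'def
  have hu : UniqueDiffOn ℝ (Set.Icc (0:ℝ) 1) := uniqueDiffOn_Icc one_pos
  have hf'c : ContinuousOn f' (Set.Icc (0:ℝ) 1) := hγ.continuousOn_derivWithin hu le_rfl
  have hf'i : IntervalIntegrable f' volume 0 1 :=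
    ContinuousOn.intervalIntegrable (by rwa [Set.uIcc_of_le zero_le_one])
  have hftc : ∫ t in (0:ℝ)..1, f' t
      = γ ⟨1, Set.right_mem_Icc.mpr zero_le_one⟩ - γ ⟨0, Set.left_mem_Icc.mpr zero_le_one⟩ := by
    rw [← Set.IccExtend_right (zero_le_one) γ, ← Set.IccExtend_left (zero_le_one) γ]
    refine intervalIntegral.integral_eq_sub_of_hasDeriv_right_of_le zero_le_one
      hγ.continuousOn (fun t ht => ?_) hf'i
    have hd : HasDerivWithinAt f (f' t) (Set.Icc (0:ℝ) 1) t :=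
      (hγ.differentiableOn one_ne_zero t (Set.Ioo_subset_Icc_self ht)).hasDerivWithinAt
    exact hd.mono_of_mem_nhdsWithin (mem_nhdsWithin_of_mem_nhds (Icc_mem_nhds ht.1 ht.2))
  have h1 : ‖γ ⟨1, Set.right_mem_Icc.mpr zero_le_one⟩
      - γ ⟨0, Set.left_mem_Icc.mpr zero_le_one⟩‖ ≤ ∫ t in (0:ℝ)..1, ‖f' t‖ := by
    rw [← hftc]; exact intervalIntegral.norm_integral_le_integral_norm zero_le_one
  set μ0 : Measure ℝ := volume.restrict (Set.Ioc (0:ℝ) 1) with hμ0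
  haveI : IsProbabilityMeasure μ0 := ⟨by simp [hμ0, Real.volume_Ioc]⟩
  have hgc : ContinuousOn (fun t => ‖f' t‖) (Set.Icc (0:ℝ) 1) := hf'c.norm
  have hmeas : AEStronglyMeasurable (fun t => ‖f' t‖) μ0 :=
    (hgc.mono Set.Ioc_subset_Icc_self).aestronglyMeasurable measurableSet_Ioc
  have hsq : Integrable (fun t => ‖f' t‖ ^ 2) μ0 :=
    ((hgc.pow 2).integrableOn_Icc).mono_set Set.Ioc_subset_Icc_self
  have hmem : MemLp (fun t => ‖f' t‖) 2 μ0 :=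
    (memLp_two_iff_integrable_sq hmeas).2 (by simpa [sq] using hsq)
  have hvar := ProbabilityTheory.variance_nonneg (fun t => ‖f' t‖) μ0
  rw [ProbabilityTheory.variance_eq_sub hmem] at hvar
  have e1 : (∫ t, ‖f' t‖ ∂μ0) = ∫ t in (0:ℝ)..1, ‖f' t‖ :=
    (intervalIntegral.integral_of_le zero_le_one).symm
  have e2 : (∫ t, ((fun t => ‖f' t‖) ^ 2) t ∂μ0) = ∫ t in (0:ℝ)..1, ‖f' t‖ ^ 2 := by
    rw [intervalIntegral.integral_of_le zero_le_one]; rfl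
  rw [e2, e1, sub_nonneg] at hvar
  have h2 : ‖γ ⟨1, Set.right_mem_Icc.mpr zero_le_one⟩
      - γ ⟨0, Set.left_mem_Icc.mpr zero_le_one⟩‖ ^ 2 ≤ ∫ t in (0:ℝ)..1, ‖f' t‖ ^ 2 :=
    le_trans (pow_le_pow_left₀ (norm_nonneg _) h1 2) hvar
  calc (1/2) * ‖γ ⟨1, Set.right_mem_Icc.mpr zero_le_one⟩
      - γ ⟨0, Set.left_mem_Icc.mpr zero_le_one⟩‖ ^ 2
      ≤ (1/2) * ∫ t in (0:ℝ)..1, ‖f' t‖ ^ 2 := by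
        apply mul_le_mul_of_nonneg_left h2 (by norm_num)
    _ = pathKE zero_le_one γ := by
        rw [pathKE, ← intervalIntegral.integral_const_mul]

lemma lineCM_zero (p : EuclideanSpace ℝ (Fin n) × EuclideanSpace ℝ (Fin n)) :
    lineCM n p ⟨0, Set.left_mem_Icc.mpr zero_le_one⟩ = p.1 := by
  rw [lineCM_apply]; simp

lemma lineCM_one (p : EuclideanSpace ℝ (Fin n) × EuclideanSpace ℝ (Fin n)) :
    lineCM n p ⟨1, Set.right_mem_Icc.mpr zero_le_one⟩ = p.2 := by
  rw [lineCM_apply]; simp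


/-- If the optimal quadratic transportation cost between `μ` and `ν` is
finite, then it equals the infimum, over Borel probability measures `P` on `C([0,1], ℝⁿ)`
with marginals `μ` at time `0` and `ν` at time `1` concentrating on continuously
differentiable paths of finite kinetic energy, of the expected kinetic energy. -/
theorem transport_cost_eq_inf_expected_kinetic_energy {n : ℕ}
    (μ ν : Measure (EuclideanSpace ℝ (Fin n)))
    [IsProbabilityMeasure μ] [IsProbabilityMeasure ν]
    (hfin : sInf {c : ℝ≥0∞ |
        ∃ π : Measure (EuclideanSpace ℝ (Fin n) × EuclideanSpace ℝ (Fin n)),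
          IsProbabilityMeasure π ∧ IsCoupling π μ ν ∧
          c = ∫⁻ p, ENNReal.ofReal ((1 / 2) * ‖p.1 - p.2‖ ^ 2) ∂π} ≠ ⊤) :
    sInf {c : ℝ≥0∞ |
        ∃ π : Measure (EuclideanSpace ℝ (Fin n) × EuclideanSpace ℝ (Fin n)),
          IsProbabilityMeasure π ∧ IsCoupling π μ ν ∧
          c = ∫⁻ p, ENNReal.ofReal ((1 / 2) * ‖p.1 - p.2‖ ^ 2) ∂π} =
    sInf {c : ℝ≥0∞ |
        ∃ P : Measure C(Set.Icc (0:ℝ) 1, EuclideanSpace ℝ (Fin n)),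
          IsProbabilityMeasure P ∧
          P.map (fun γ => γ ⟨0, Set.left_mem_Icc.mpr zero_le_one⟩) = μ ∧
          P.map (fun γ => γ ⟨1, Set.right_mem_Icc.mpr zero_le_one⟩) = ν ∧
          (∀ᵐ γ ∂P, IsC1Path zero_le_one γ ∧ FiniteKE zero_le_one γ) ∧
          c = ∫⁻ γ, ENNReal.ofReal (pathKE zero_le_one γ) ∂P} := by
  have he0 : Measurable (fun γ : C(Set.Icc (0:ℝ) 1, EuclideanSpace ℝ (Fin n)) =>
      γ ⟨0, Set.left_mem_Icc.mpr zero_le_one⟩) :=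
    (continuous_eval_const _).measurable
  have he1 : Measurable (fun γ : C(Set.Icc (0:ℝ) 1, EuclideanSpace ℝ (Fin n)) =>
      γ ⟨1, Set.right_mem_Icc.mpr zero_le_one⟩) :=
    (continuous_eval_const _).measurable
  set e : C(Set.Icc (0:ℝ) 1, EuclideanSpace ℝ (Fin n)) →
      EuclideanSpace ℝ (Fin n) × EuclideanSpace ℝ (Fin n) :=
    fun γ => (γ ⟨0, Set.left_mem_Icc.mpr zero_le_one⟩,
              γ ⟨1, Set.right_mem_Icc.mpr zero_le_one⟩) with he_def
  have he_cont : Continuous e :=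
    (continuous_eval_const _).prodMk (continuous_eval_const _)
  have he : Measurable e := he_cont.measurable
  have hL : Measurable (lineCM n) := (lineCM n).continuous.measurable
  have hcost_meas : Measurable (fun p : EuclideanSpace ℝ (Fin n) × EuclideanSpace ℝ (Fin n) =>
      ENNReal.ofReal ((1 / 2) * ‖p.1 - p.2‖ ^ 2)) := by
    apply (ENNReal.continuous_ofReal.comp ?_).measurable
    fun_prop
  apply le_antisymm
  · -- coupling infimum ≤ path infimum
    refine le_sInf ?_
    rintro c ⟨P, hP, hPμ, hPν, hae, rfl⟩
    set π := P.map e with hπdef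
    haveI : IsProbabilityMeasure π := Measure.isProbabilityMeasure_map he.aemeasurable
    have hfst : π.map Prod.fst = μ := by
      rw [hπdef, Measure.map_map measurable_fst he]; exact hPμ
    have hsnd : π.map Prod.snd = ν := by
      rw [hπdef, Measure.map_map measurable_snd he]; exact hPν
    refine le_trans (sInf_le ⟨π, inferInstance, ⟨hfst, hsnd⟩, rfl⟩) ?_
    rw [hπdef, lintegral_map hcost_meas he]
    refine lintegral_mono_ae ?_
    filter_upwards [hae] with γ hγ
    refine ENNReal.ofReal_le_ofReal ?_
    simpa [he_def, norm_sub_rev] using KE_lowerBound hγ.1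
  · -- path infimum ≤ coupling infimum
    refine le_sInf ?_
    rintro c ⟨π, hπ, ⟨hπ1, hπ2⟩, rfl⟩
    set P := π.map (lineCM n) with hPdef
    haveI : IsProbabilityMeasure P := Measure.isProbabilityMeasure_map hL.aemeasurable
    have hfix_closed : MeasurableSet {γ : C(Set.Icc (0:ℝ) 1, EuclideanSpace ℝ (Fin n)) |
        lineCM n (e γ) = γ} :=
      (isClosed_eq ((lineCM n).continuous.comp he_cont) continuous_id).measurableSet
    have haeRange : ∀ᵐ γ ∂P, lineCM n (e γ) = γ := by
      rw [ae_iff, hPdef,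
        show {a : C(Set.Icc (0:ℝ) 1, EuclideanSpace ℝ (Fin n)) | ¬ lineCM n (e a) = a}
          = {γ | lineCM n (e γ) = γ}ᶜ from rfl,
        Measure.map_apply hL hfix_closed.compl]
      have hpre : (⇑(lineCM n)) ⁻¹' ({γ | lineCM n (e γ) = γ}ᶜ) = ∅ := by
        ext p
        simp only [Set.mem_preimage, Set.mem_compl_iff, Set.mem_setOf_eq,
          Set.mem_empty_iff_false, iff_false, not_not]
        have hep : e (lineCM n p) = p := Prod.ext (lineCM_zero p) (lineCM_one p)
        rw [hep]
      rw [hpre]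
      simp
    have hP1 : P.map (fun γ => γ ⟨0, Set.left_mem_Icc.mpr zero_le_one⟩) = μ := by
      rw [hPdef, Measure.map_map he0 hL]
      have : ((fun γ : C(Set.Icc (0:ℝ) 1, EuclideanSpace ℝ (Fin n)) =>
          γ ⟨0, Set.left_mem_Icc.mpr zero_le_one⟩) ∘ lineCM n)
          = (Prod.fst : EuclideanSpace ℝ (Fin n) × EuclideanSpace ℝ (Fin n) → _) :=
        funext fun p => lineCM_zero p
      rw [this, hπ1]
    have hP2 : P.map (fun γ => γ ⟨1, Set.right_mem_Icc.mpr zero_le_one⟩) = ν := by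
      rw [hPdef, Measure.map_map he1 hL]
      have : ((fun γ : C(Set.Icc (0:ℝ) 1, EuclideanSpace ℝ (Fin n)) =>
          γ ⟨1, Set.right_mem_Icc.mpr zero_le_one⟩) ∘ lineCM n)
          = (Prod.snd : EuclideanSpace ℝ (Fin n) × EuclideanSpace ℝ (Fin n) → _) :=
        funext fun p => lineCM_one p
      rw [this, hπ2]
    have haeC1 : ∀ᵐ γ ∂P, IsC1Path zero_le_one γ ∧ FiniteKE zero_le_one γ := by
      filter_upwards [haeRange] with γ hγ
      rw [← hγ]
      exact ⟨lineCM_isC1 _, (lineCM_isC1 _).finiteKE⟩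
    have hcost : ∫⁻ γ, ENNReal.ofReal (pathKE zero_le_one γ) ∂P
        = ∫⁻ p, ENNReal.ofReal ((1 / 2) * ‖p.1 - p.2‖ ^ 2) ∂π := by
      have h1 : (fun γ => ENNReal.ofReal (pathKE zero_le_one γ))
          =ᵐ[P] (fun γ => ENNReal.ofReal ((1 / 2) *
            ‖γ ⟨0, Set.left_mem_Icc.mpr zero_le_one⟩
              - γ ⟨1, Set.right_mem_Icc.mpr zero_le_one⟩‖ ^ 2)) := by
        filter_upwards [haeRange] with γ hγ
        conv_lhs => rw [← hγ, lineCM_KE]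
        rw [he_def]
        simp [norm_sub_rev]
      have hG : Measurable (fun γ : C(Set.Icc (0:ℝ) 1, EuclideanSpace ℝ (Fin n)) =>
          ENNReal.ofReal ((1 / 2) *
            ‖γ ⟨0, Set.left_mem_Icc.mpr zero_le_one⟩
              - γ ⟨1, Set.right_mem_Icc.mpr zero_le_one⟩‖ ^ 2)) := by
        apply (ENNReal.continuous_ofReal.comp ?_).measurable
        exact (continuous_const.mul (((continuous_eval_const _).sub
          (continuous_eval_const _)).norm.pow 2))
      rw [lintegral_congr_ae h1, hPdef, lintegral_map hG hL]
      refine lintegral_congr fun p => ?_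
      rw [lineCM_zero, lineCM_one]
    exact sInf_le ⟨P, inferInstance, hP1, hP2, haeC1, hcost.symm⟩
end

section
/- Let b : ℝⁿ × ℝ → ℝⁿ be continuously differentiable. Let φ : ℝⁿ × ℝ → ℝ be everywhere positive, twice continuously differentiable in x and continuously differentiable in t, and satisfy ∂φ/∂t + b·∇φ + (1/2)Δφ = 0 on ℝⁿ × (t₀,t₁). Let ρ̃ : ℝⁿ × ℝ → ℝ be twice continuously differentiable in x and continuously differentiable in t and satisfy the Fokker–Planck equation ∂ρ̃/∂t + ∇·((b + ∇ ln φ) ρ̃) − (1/2)Δρ̃ = 0 on ℝⁿ × (t₀,t₁). Then the function φ̂ := ρ̃/φ satisfies ∂φ̂/∂t + ∇·(b φ̂) − (1/2)Δφ̂ = 0 on ℝⁿ × (t₀,t₁). -/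
open Set
open scoped RealInnerProductSpace

/-- The Laplacian in `x` of `f : ℝⁿ → ℝ`: the sum of the second partial derivatives. -/
noncomputable def lap {n : ℕ} (f : EuclideanSpace ℝ (Fin n) → ℝ)
    (x : EuclideanSpace ℝ (Fin n)) : ℝ :=
  ∑ i : Fin n,
    fderiv ℝ (fun y => fderiv ℝ f y (EuclideanSpace.single i 1)) x (EuclideanSpace.single i 1)

/-- The divergence in `x` of a vector field `w : ℝⁿ → ℝⁿ`: `∑ i, ∂wᵢ/∂xᵢ`. -/
noncomputable def diver {n : ℕ} (w : EuclideanSpace ℝ (Fin n) → EuclideanSpace ℝ (Fin n))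
    (x : EuclideanSpace ℝ (Fin n)) : ℝ :=
  ∑ i : Fin n, fderiv ℝ (fun y => w y i) x (EuclideanSpace.single i 1)

section Helpers
variable {n : ℕ}
local notation "E" => EuclideanSpace ℝ (Fin n)


private theorem pd_mul' (f g : E → ℝ) (x v : E) (hf : DifferentiableAt ℝ f x)
    (hg : DifferentiableAt ℝ g x) :
    fderiv ℝ (fun y => f y * g y) x v = fderiv ℝ f x v * g x + f x * fderiv ℝ g x v := by
  rw [fderiv_fun_mul hf hg]; simp; ring

private theorem pd_div' (f g : E → ℝ) (x v : E) (hf : DifferentiableAt ℝ f x)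
    (hg : DifferentiableAt ℝ g x) (hgx : g x ≠ 0) :
    fderiv ℝ (fun y => f y / g y) x v
      = (fderiv ℝ f x v * g x - f x * fderiv ℝ g x v) / (g x)^2 := by
  have h1 : HasFDerivAt (fun y => (g y)⁻¹) ((-((g x)^2)⁻¹) • fderiv ℝ g x) x :=
    (hasDerivAt_inv hgx).comp_hasFDerivAt x hg.hasFDerivAt
  have h2 := hf.hasFDerivAt.mul h1
  simp only [div_eq_mul_inv]
  rw [(show HasFDerivAt (fun y => f y * (g y)⁻¹) _ x from h2).fderiv]; simp; field_simp; ring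

private theorem grad_coord (f : E → ℝ) (x : E) (i : Fin n) :
    gradient f x i = fderiv ℝ f x (EuclideanSpace.single i 1) := by
  have h : ⟪gradient f x, EuclideanSpace.single i (1:ℝ)⟫
      = fderiv ℝ f x (EuclideanSpace.single i 1) := by
    rw [gradient]; exact InnerProductSpace.toDual_symm_apply
  rw [EuclideanSpace.inner_single_right] at h
  simpa using h

private theorem inner_grad (w : E) (f : E → ℝ) (x : E) :
    ⟪w, gradient f x⟫ = ∑ i, w i * fderiv ℝ f x (EuclideanSpace.single i 1) := by
  rw [PiLp.inner_apply]
  exact Finset.sum_congr rfl fun i _ => by rw [grad_coord]; simp; ring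

/-- Laplacian of a quotient. -/
private theorem lap_div (U V : E → ℝ) (hU : ContDiff ℝ 2 U) (hV : ContDiff ℝ 2 V)
    (h0 : ∀ y, V y ≠ 0) (x : E) :
    lap (fun y => U y / V y) x = ∑ i,
      ((fderiv ℝ (fun y => fderiv ℝ U y (EuclideanSpace.single i 1)) x (EuclideanSpace.single i 1)
            * V x
          - U x * fderiv ℝ (fun y => fderiv ℝ V y (EuclideanSpace.single i 1)) x
              (EuclideanSpace.single i 1)) * (V x * V x)
        - (fderiv ℝ U x (EuclideanSpace.single i 1) * V x
            - U x * fderiv ℝ V x (EuclideanSpace.single i 1))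
          * (fderiv ℝ V x (EuclideanSpace.single i 1) * V x
            + V x * fderiv ℝ V x (EuclideanSpace.single i 1)))
      / (V x * V x)^2 := by
  have hUd : Differentiable ℝ U := hU.differentiable (by norm_num)
  have hVd : Differentiable ℝ V := hV.differentiable (by norm_num)
  have hU1 : ∀ i : Fin n, ContDiff ℝ 1 (fun y => fderiv ℝ U y (EuclideanSpace.single i 1)) :=
    fun i => (hU.fderiv_right (by norm_num)).clm_apply contDiff_const
  have hV1 : ∀ i : Fin n, ContDiff ℝ 1 (fun y => fderiv ℝ V y (EuclideanSpace.single i 1)) :=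
    fun i => (hV.fderiv_right (by norm_num)).clm_apply contDiff_const
  unfold lap
  refine Finset.sum_congr rfl fun i _ => ?_
  have hrw : (fun y => fderiv ℝ (fun z => U z / V z) y (EuclideanSpace.single i 1))
      = fun y => (fderiv ℝ U y (EuclideanSpace.single i 1) * V y
          - U y * fderiv ℝ V y (EuclideanSpace.single i 1)) / (V y * V y) := by
    funext y
    rw [pd_div' U V y _ (hUd y) (hVd y) (h0 y)]
    rw [pow_two]
  rw [hrw]
  have d1 : DifferentiableAt ℝ (fun y => fderiv ℝ U y (EuclideanSpace.single i 1) * V y) x :=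
    (((hU1 i).differentiable one_ne_zero) x).mul (hVd x)
  have d2 : DifferentiableAt ℝ (fun y => U y * fderiv ℝ V y (EuclideanSpace.single i 1)) x :=
    (hUd x).mul (((hV1 i).differentiable one_ne_zero) x)
  have hnum : fderiv ℝ (fun y => fderiv ℝ U y (EuclideanSpace.single i 1) * V y
      - U y * fderiv ℝ V y (EuclideanSpace.single i 1)) x (EuclideanSpace.single i 1)
      = (fderiv ℝ (fun y => fderiv ℝ U y (EuclideanSpace.single i 1)) x (EuclideanSpace.single i 1)
          * V x + fderiv ℝ U x (EuclideanSpace.single i 1) * fderiv ℝ V x (EuclideanSpace.single i 1))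
        - (fderiv ℝ U x (EuclideanSpace.single i 1) * fderiv ℝ V x (EuclideanSpace.single i 1)
          + U x * fderiv ℝ (fun y => fderiv ℝ V y (EuclideanSpace.single i 1)) x
              (EuclideanSpace.single i 1)) := by
    rw [fderiv_fun_sub d1 d2, ContinuousLinearMap.sub_apply,
      pd_mul' _ _ _ _ (((hU1 i).differentiable one_ne_zero) x) (hVd x),
      pd_mul' _ _ _ _ (hUd x) (((hV1 i).differentiable one_ne_zero) x)]
  have hden : fderiv ℝ (fun y => V y * V y) x (EuclideanSpace.single i 1)
      = fderiv ℝ V x (EuclideanSpace.single i 1) * V x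
        + V x * fderiv ℝ V x (EuclideanSpace.single i 1) :=
    pd_mul' _ _ _ _ (hVd x) (hVd x)
  rw [pd_div' _ _ x _ (show DifferentiableAt ℝ (fun y => fderiv ℝ U y (EuclideanSpace.single i 1) * V y
      - U y * fderiv ℝ V y (EuclideanSpace.single i 1)) x from d1.sub d2)
      (show DifferentiableAt ℝ (fun y => V y * V y) x from (hVd x).mul (hVd x)) (mul_ne_zero (h0 x) (h0 x)),
    hnum, hden]
  ring

private theorem diffAt_div' {f g : E → ℝ} {x : E} (hf : DifferentiableAt ℝ f x)
    (hg : DifferentiableAt ℝ g x) (h0 : g x ≠ 0) :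
    DifferentiableAt ℝ (fun y => f y / g y) x := by
  simp only [div_eq_mul_inv]; exact hf.mul (hg.inv h0)

/-- Divergence of `(U/V) • B`. -/
private theorem diver_div_smul (U V : E → ℝ) (Bv : E → E) (hU : ContDiff ℝ 2 U)
    (hV : ContDiff ℝ 2 V) (hB : ContDiff ℝ 1 Bv) (h0 : ∀ y, V y ≠ 0) (x : E) :
    diver (fun y => (U y / V y) • Bv y) x = ∑ i,
      ((fderiv ℝ U x (EuclideanSpace.single i 1) * V x
          - U x * fderiv ℝ V x (EuclideanSpace.single i 1)) / (V x)^2 * Bv x i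
        + (U x / V x) * fderiv ℝ (fun y => Bv y i) x (EuclideanSpace.single i 1)) := by
  have hUd : Differentiable ℝ U := hU.differentiable (by norm_num)
  have hVd : Differentiable ℝ V := hV.differentiable (by norm_num)
  have hBd : ∀ i : Fin n, Differentiable ℝ (fun y => Bv y i) :=
    fun i => (ContDiff.comp (EuclideanSpace.proj i : E →L[ℝ] ℝ).contDiff hB).differentiable one_ne_zero
  unfold diver
  refine Finset.sum_congr rfl fun i _ => ?_
  have hco : (fun y => ((U y / V y) • Bv y : E) i) = fun y => (U y / V y) * Bv y i := by
    funext y; simp [PiLp.smul_apply]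
  rw [hco, pd_mul' _ _ _ _ (diffAt_div' (hUd x) (hVd x) (h0 x)) (hBd i x),
    pd_div' U V x _ (hUd x) (hVd x) (h0 x)]

/-- Divergence of `U • (B + ∇ log V)`. -/
private theorem diver_fp (U V : E → ℝ) (Bv : E → E) (hU : ContDiff ℝ 2 U)
    (hV : ContDiff ℝ 2 V) (hB : ContDiff ℝ 1 Bv) (h0 : ∀ y, V y ≠ 0) (x : E) :
    diver (fun y => U y • (Bv y + gradient (fun z => Real.log (V z)) y)) x = ∑ i,
      (fderiv ℝ U x (EuclideanSpace.single i 1)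
          * (Bv x i + fderiv ℝ V x (EuclideanSpace.single i 1) / V x)
        + U x * (fderiv ℝ (fun y => Bv y i) x (EuclideanSpace.single i 1)
            + (fderiv ℝ (fun y => fderiv ℝ V y (EuclideanSpace.single i 1)) x
                  (EuclideanSpace.single i 1) * V x
                - fderiv ℝ V x (EuclideanSpace.single i 1)
                  * fderiv ℝ V x (EuclideanSpace.single i 1)) / (V x)^2)) := by
  have hUd : Differentiable ℝ U := hU.differentiable (by norm_num)
  have hVd : Differentiable ℝ V := hV.differentiable (by norm_num)
  have hBd : ∀ i : Fin n, Differentiable ℝ (fun y => Bv y i) :=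
    fun i => (ContDiff.comp (EuclideanSpace.proj i : E →L[ℝ] ℝ).contDiff hB).differentiable one_ne_zero
  have hV1 : ∀ i : Fin n, Differentiable ℝ (fun y => fderiv ℝ V y (EuclideanSpace.single i 1)) :=
    fun i => (((hV.fderiv_right (by norm_num)).clm_apply contDiff_const).differentiable one_ne_zero)
  unfold diver
  refine Finset.sum_congr rfl fun i _ => ?_
  have hlog : ∀ y : E, fderiv ℝ (fun z => Real.log (V z)) y = (V y)⁻¹ • fderiv ℝ V y :=
    fun y => ((Real.hasDerivAt_log (h0 y)).comp_hasFDerivAt y (hVd y).hasFDerivAt).fderiv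
  have hco : (fun y => ((U y • (Bv y + gradient (fun z => Real.log (V z)) y)) : E) i)
      = fun y => U y * (Bv y i + fderiv ℝ V y (EuclideanSpace.single i 1) / V y) := by
    funext y
    simp only [PiLp.smul_apply, PiLp.add_apply, smul_eq_mul]
    congr 1
    rw [grad_coord, hlog y]
    simp [div_eq_inv_mul]
  rw [hco]
  have dq : DifferentiableAt ℝ
      (fun y => fderiv ℝ V y (EuclideanSpace.single i 1) / V y) x :=
    diffAt_div' (hV1 i x) (hVd x) (h0 x)
  have ha : fderiv ℝ (fun y => Bv y i + fderiv ℝ V y (EuclideanSpace.single i 1) / V y) x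
        (EuclideanSpace.single i 1)
      = fderiv ℝ (fun y => Bv y i) x (EuclideanSpace.single i 1)
        + (fderiv ℝ (fun y => fderiv ℝ V y (EuclideanSpace.single i 1)) x
              (EuclideanSpace.single i 1) * V x
            - fderiv ℝ V x (EuclideanSpace.single i 1)
              * fderiv ℝ V x (EuclideanSpace.single i 1)) / (V x)^2 := by
    rw [fderiv_fun_add (hBd i x) dq, ContinuousLinearMap.add_apply,
      pd_div' _ V x _ (hV1 i x) (hVd x) (h0 x)]
  rw [pd_mul' _ _ _ _ (hUd x) (show DifferentiableAt ℝ
      (fun y => Bv y i + fderiv ℝ V y (EuclideanSpace.single i 1) / V y) x from (hBd i x).add dq), ha]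

/-- The purely algebraic combination of the two PDEs. -/
private theorem final_combine (v u du dv : ℝ) (hv : v ≠ 0) (ui vi uii vii Bi bii : Fin n → ℝ)
    (hρ : du + (∑ i, (ui i * (Bi i + vi i / v)
          + u * (bii i + (vii i * v - vi i * vi i) / v ^ 2)))
        - 1 / 2 * (∑ i, uii i) = 0)
    (hφ : dv + (∑ i, Bi i * vi i) + 1 / 2 * (∑ i, vii i) = 0) :
    (du / v - u * dv / v ^ 2)
      + (∑ i, ((ui i * v - u * vi i) / v ^ 2 * Bi i + u / v * bii i))
      - 1 / 2 * (∑ i, (((uii i * v - u * vii i) * (v * v)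
          - (ui i * v - u * vi i) * (vi i * v + v * vi i)) / (v * v) ^ 2)) = 0 := by
  have hs : (∑ i, ((ui i * v - u * vi i) / v ^ 2 * Bi i + u / v * bii i))
      - 1 / 2 * (∑ i, (((uii i * v - u * vii i) * (v * v)
          - (ui i * v - u * vi i) * (vi i * v + v * vi i)) / (v * v) ^ 2))
      = (1 / v) * ((∑ i, (ui i * (Bi i + vi i / v)
            + u * (bii i + (vii i * v - vi i * vi i) / v ^ 2)))
          - 1 / 2 * (∑ i, uii i))
        - (u / v ^ 2) * ((∑ i, Bi i * vi i) + 1 / 2 * (∑ i, vii i)) := by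
    simp only [Finset.mul_sum, mul_sub, mul_add, ← Finset.sum_sub_distrib,
      ← Finset.sum_add_distrib]
    refine Finset.sum_congr rfl fun i _ => ?_
    field_simp
    ring
  linear_combination hs + (1 / v) * hρ - (u / v ^ 2) * hφ

end Helpers

/-- If `φ > 0` is space-time harmonic for the drift `b` and `ρ̃` solves the
Fokker–Planck equation with drift `b + ∇ ln φ`, then `φ̂ := ρ̃/φ` solves the Fokker–Planck
equation with drift `b`, i.e. `∂φ̂/∂t + ∇·(b φ̂) − (1/2)Δφ̂ = 0` on `ℝⁿ × (t₀,t₁)`. -/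
theorem ratio_solves_fokker_planck {n : ℕ} (t₀ t₁ : ℝ)
    (b : EuclideanSpace ℝ (Fin n) → ℝ → EuclideanSpace ℝ (Fin n))
    (φ ρt : EuclideanSpace ℝ (Fin n) → ℝ → ℝ)
    (hb : ContDiff ℝ 1 fun p : EuclideanSpace ℝ (Fin n) × ℝ => b p.1 p.2)
    (hφpos : ∀ x t, 0 < φ x t)
    (hφx : ∀ t : ℝ, ContDiff ℝ 2 fun x => φ x t)
    (hφt : ∀ x, ContDiff ℝ 1 fun t => φ x t)
    (hφpde : ∀ x, ∀ t ∈ Set.Ioo t₀ t₁,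
      deriv (fun s => φ x s) t + ⟪b x t, gradient (fun y => φ y t) x⟫
        + (1 / 2) * lap (fun y => φ y t) x = 0)
    (hρx : ∀ t : ℝ, ContDiff ℝ 2 fun x => ρt x t)
    (hρt : ∀ x, ContDiff ℝ 1 fun t => ρt x t)
    (hρpde : ∀ x, ∀ t ∈ Set.Ioo t₀ t₁,
      deriv (fun s => ρt x s) t
        + diver (fun y => ρt y t • (b y t + gradient (fun z => Real.log (φ z t)) y)) x
        - (1 / 2) * lap (fun y => ρt y t) x = 0) :
    ∀ x, ∀ t ∈ Set.Ioo t₀ t₁,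
      deriv (fun s => ρt x s / φ x s) t
        + diver (fun y => (ρt y t / φ y t) • b y t) x
        - (1 / 2) * lap (fun y => ρt y t / φ y t) x = 0 := by
  intro x t ht
  have hU : ContDiff ℝ 2 fun y => ρt y t := hρx t
  have hV : ContDiff ℝ 2 fun y => φ y t := hφx t
  have h0 : ∀ y, φ y t ≠ 0 := fun y => (hφpos y t).ne'
  have hBc : ContDiff ℝ 1 fun y : EuclideanSpace ℝ (Fin n) => b y t :=
    hb.comp (contDiff_id.prodMk contDiff_const)
  have hρ' := hρpde x t ht
  have hφ' := hφpde x t ht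
  have h3 := diver_fp (fun y => ρt y t) (fun y => φ y t) (fun y => b y t) hU hV hBc h0 x
  have h2 := diver_div_smul (fun y => ρt y t) (fun y => φ y t) (fun y => b y t) hU hV hBc h0 x
  have h1 := lap_div (fun y => ρt y t) (fun y => φ y t) hU hV h0 x
  beta_reduce at h3 h2 h1
  rw [h3] at hρ'
  rw [inner_grad (b x t) (fun y => φ y t) x] at hφ'
  unfold lap at hρ' hφ'
  have hder : deriv (fun s => ρt x s / φ x s) t
      = deriv (fun s => ρt x s) t / φ x t
        - ρt x t * deriv (fun s => φ x s) t / (φ x t) ^ 2 := by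
    rw [deriv_fun_div ((hρt x).differentiable one_ne_zero).differentiableAt
      ((hφt x).differentiable one_ne_zero).differentiableAt (h0 x)]
    have hx := h0 x
    field_simp
  rw [hder, h2, h1]
  exact final_combine (φ x t) (ρt x t) (deriv (fun s => ρt x s) t) (deriv (fun s => φ x s) t)
    (h0 x) _ _ _ _ _ _ hρ' hφ'
end

section
/- Let b : ℝⁿ × ℝ → ℝⁿ be continuously differentiable. Let φ̂ and ρ be functions on ℝⁿ × ℝ, twice continuously differentiable in x and continuously differentiable in t, with ρ everywhere positive, both satisfying the same Fokker–Planck equation ∂f/∂t + ∇·(b f) − (1/2)Δf = 0 on ℝⁿ × (t₀,t₁). Then the ratio ψ := φ̂/ρ satisfies the reverse-time space-time harmonic equation ∂ψ/∂t + (b − ∇ ln ρ)·∇ψ − (1/2)Δψ = 0 on ℝⁿ × (t₀,t₁). -/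
open Set
open scoped RealInnerProductSpace

section Helpers

variable {n : ℕ} {x v : EuclideanSpace ℝ (Fin n)}

lemma euclid_inner_grad (f : EuclideanSpace ℝ (Fin n) → ℝ) (x v : EuclideanSpace ℝ (Fin n)) :
    ⟪gradient f x, v⟫ = fderiv ℝ f x v := by
  rw [gradient, InnerProductSpace.toDual_symm_apply]

lemma euclid_grad_apply (f : EuclideanSpace ℝ (Fin n) → ℝ) (x : EuclideanSpace ℝ (Fin n))
    (i : Fin n) : gradient f x i = fderiv ℝ f x (EuclideanSpace.single i 1) := by
  rw [← euclid_inner_grad]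
  simp only [PiLp.inner_apply, EuclideanSpace.single_apply]
  simp

lemma euclid_inner_eq_sum (u v : EuclideanSpace ℝ (Fin n)) : ⟪u, v⟫ = ∑ i, u i * v i := by
  simp [PiLp.inner_apply, mul_comm]

lemma hasFDerivAt_div' {f g : EuclideanSpace ℝ (Fin n) → ℝ}
    {f' g' : EuclideanSpace ℝ (Fin n) →L[ℝ] ℝ}
    (hf : HasFDerivAt f f' x) (hg : HasFDerivAt g g' x) (h0 : g x ≠ 0) :
    HasFDerivAt (fun y => f y / g y)
      ((f x * (-(g x ^ 2)⁻¹)) • g' + (g x)⁻¹ • f') x := by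
  have hinv : HasFDerivAt (fun y => (g y)⁻¹) ((-(g x ^ 2)⁻¹) • g') x := by
    exact (hasDerivAt_inv h0).comp_hasFDerivAt x hg
  have := hf.mul hinv
  simp only [smul_smul] at this
  rw [show (fun y => f y / g y) = fun y => f y * (g y)⁻¹ from funext fun y => div_eq_mul_inv _ _]
  exact this

lemma hasFDerivAt_log' {g : EuclideanSpace ℝ (Fin n) → ℝ}
    {g' : EuclideanSpace ℝ (Fin n) →L[ℝ] ℝ}
    (hg : HasFDerivAt g g' x) (h0 : g x ≠ 0) :
    HasFDerivAt (fun y => Real.log (g y)) ((g x)⁻¹ • g') x := by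
  exact (Real.hasDerivAt_log h0).comp_hasFDerivAt x hg

lemma second_deriv_div (f g : EuclideanSpace ℝ (Fin n) → ℝ)
    (hf : ContDiff ℝ 2 f) (hg : ContDiff ℝ 2 g) (hgpos : ∀ y, 0 < g y)
    (x v : EuclideanSpace ℝ (Fin n)) :
    fderiv ℝ (fun y => fderiv ℝ (fun z => f z / g z) y v) x v =
      (fderiv ℝ (fun y => fderiv ℝ f y v) x v * g x
        - f x * fderiv ℝ (fun y => fderiv ℝ g y v) x v) / g x ^ 2
      - 2 * fderiv ℝ g x v * (fderiv ℝ f x v * g x - f x * fderiv ℝ g x v) / g x ^ 3 := by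
  have hfd : Differentiable ℝ f := hf.differentiable (by norm_num)
  have hgd : Differentiable ℝ g := hg.differentiable (by norm_num)
  have hq : (fun y => fderiv ℝ (fun z => f z / g z) y v)
      = fun y => (f y * (-(g y ^ 2)⁻¹)) * fderiv ℝ g y v + (g y)⁻¹ * fderiv ℝ f y v := by
    funext y
    rw [(hasFDerivAt_div' (hfd y).hasFDerivAt (hgd y).hasFDerivAt (hgpos y).ne').fderiv]
    simp [smul_eq_mul]
  rw [hq]
  have hDf : HasFDerivAt (fun y => fderiv ℝ f y v) (fderiv ℝ (fun y => fderiv ℝ f y v) x) x :=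
    ((((hf.fderiv_right (m := 1) (by norm_num)).clm_apply contDiff_const).differentiable one_ne_zero) x).hasFDerivAt
  have hDg : HasFDerivAt (fun y => fderiv ℝ g y v) (fderiv ℝ (fun y => fderiv ℝ g y v) x) x :=
    ((((hg.fderiv_right (m := 1) (by norm_num)).clm_apply contDiff_const).differentiable one_ne_zero) x).hasFDerivAt
  have hfx := (hfd x).hasFDerivAt
  have hgx := (hgd x).hasFDerivAt
  have hsq : HasFDerivAt (fun y => g y ^ 2) ((g x • fderiv ℝ g x) + (g x • fderiv ℝ g x)) x := by
    rw [show (fun y => g y ^ 2) = fun y => g y * g y from funext fun y => pow_two _]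
    exact hgx.mul hgx
  have hinvsq : HasFDerivAt (fun y => -(g y ^ 2)⁻¹)
      (-((-((g x ^ 2) ^ 2)⁻¹) • ((g x • fderiv ℝ g x) + (g x • fderiv ℝ g x)))) x := by
    have h2 := (hasDerivAt_inv (pow_ne_zero 2 (hgpos x).ne')).comp_hasFDerivAt x hsq
    exact h2.neg
  have main := ((hfx.mul hinvsq).mul hDg).add
    (((by exact (hasDerivAt_inv (hgpos x).ne').comp_hasFDerivAt x hgx :
      HasFDerivAt (fun y => (g y)⁻¹) ((-(g x ^ 2)⁻¹) • fderiv ℝ g x) x)).mul hDf)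
  rw [HasFDerivAt.fderiv
    (f := fun y => f y * -(g y ^ 2)⁻¹ * (fderiv ℝ g y) v + (g y)⁻¹ * (fderiv ℝ f y) v) main]
  have h0 := (hgpos x).ne'
  simp only [ContinuousLinearMap.add_apply, ContinuousLinearMap.smul_apply,
    ContinuousLinearMap.neg_apply, smul_eq_mul, Pi.mul_apply]
  field_simp
  ring

lemma algebra_main {n : ℕ} (R P a c : ℝ) (hR : R ≠ 0) (f g F G β d : Fin n → ℝ)
    (E1 : a + (∑ i, (P * d i + β i * f i)) - (1 / 2) * ∑ i, F i = 0)
    (E2 : c + (∑ i, (R * d i + β i * g i)) - (1 / 2) * ∑ i, G i = 0) :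
    (a * R - P * c) / R ^ 2
      + (∑ i, ((β i - g i / R) * ((P * (-(R ^ 2)⁻¹)) * g i + R⁻¹ * f i)))
      - (1 / 2) * ∑ i, ((F i * R - P * G i) / R ^ 2
          - 2 * g i * (f i * R - P * g i) / R ^ 3) = 0 := by
  have key : ∀ i ∈ (Finset.univ : Finset (Fin n)),
      (β i - g i / R) * ((P * (-(R ^ 2)⁻¹)) * g i + R⁻¹ * f i)
        - (1 / 2) * ((F i * R - P * G i) / R ^ 2 - 2 * g i * (f i * R - P * g i) / R ^ 3)
      = (1 / R) * (P * d i + β i * f i) - (1 / (2 * R)) * F i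
        - (P / R ^ 2) * (R * d i + β i * g i) + (P / (2 * R ^ 2)) * G i := by
    intro i _
    field_simp
    ring
  have hs : (∑ i, ((β i - g i / R) * ((P * (-(R ^ 2)⁻¹)) * g i + R⁻¹ * f i)))
      - (1 / 2) * ∑ i, ((F i * R - P * G i) / R ^ 2 - 2 * g i * (f i * R - P * g i) / R ^ 3)
      = ∑ i, ((β i - g i / R) * ((P * (-(R ^ 2)⁻¹)) * g i + R⁻¹ * f i)
          - (1 / 2) * ((F i * R - P * G i) / R ^ 2
            - 2 * g i * (f i * R - P * g i) / R ^ 3)) := by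
    rw [Finset.mul_sum, ← Finset.sum_sub_distrib]
  rw [add_sub_assoc, hs, Finset.sum_congr rfl key]
  simp only [Finset.sum_add_distrib, Finset.sum_sub_distrib, ← Finset.mul_sum]
  simp only [Finset.sum_add_distrib, ← Finset.mul_sum] at E1 E2
  have hA : ∑ x : Fin n, β x * f x
      = 1 / 2 * (∑ i, F i) - a - P * ∑ i, d i := by linarith
  have hB : ∑ x : Fin n, β x * g x
      = 1 / 2 * (∑ i, G i) - c - R * ∑ i, d i := by linarith
  rw [hA, hB]
  field_simp
  ring

end Helpers

/-- If `φ̂` and `ρ > 0` both solve the Fokker–Planck equation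
`∂f/∂t + ∇·(b f) − (1/2)Δf = 0`, then `ψ := φ̂/ρ` solves the reverse-time space-time
harmonic equation `∂ψ/∂t + (b − ∇ ln ρ)·∇ψ − (1/2)Δψ = 0` on `ℝⁿ × (t₀,t₁)`. -/
theorem ratio_of_fokker_planck_solutions_reverse_harmonic {n : ℕ} (t₀ t₁ : ℝ)
    (b : EuclideanSpace ℝ (Fin n) → ℝ → EuclideanSpace ℝ (Fin n))
    (φh ρ : EuclideanSpace ℝ (Fin n) → ℝ → ℝ)
    (hb : ContDiff ℝ 1 fun p : EuclideanSpace ℝ (Fin n) × ℝ => b p.1 p.2)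
    (hρpos : ∀ x t, 0 < ρ x t)
    (hφx : ∀ t : ℝ, ContDiff ℝ 2 fun x => φh x t)
    (hφt : ∀ x, ContDiff ℝ 1 fun t => φh x t)
    (hρx : ∀ t : ℝ, ContDiff ℝ 2 fun x => ρ x t)
    (hρt : ∀ x, ContDiff ℝ 1 fun t => ρ x t)
    (hφpde : ∀ x, ∀ t ∈ Set.Ioo t₀ t₁,
      deriv (fun s => φh x s) t + diver (fun y => φh y t • b y t) x
        - (1 / 2) * lap (fun y => φh y t) x = 0)
    (hρpde : ∀ x, ∀ t ∈ Set.Ioo t₀ t₁,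
      deriv (fun s => ρ x s) t + diver (fun y => ρ y t • b y t) x
        - (1 / 2) * lap (fun y => ρ y t) x = 0) :
    ∀ x, ∀ t ∈ Set.Ioo t₀ t₁,
      deriv (fun s => φh x s / ρ x s) t
        + ⟪b x t - gradient (fun y => Real.log (ρ y t)) x,
            gradient (fun y => φh y t / ρ y t) x⟫
        - (1 / 2) * lap (fun y => φh y t / ρ y t) x = 0 := by
  intro x t ht
  have hR : 0 < ρ x t := hρpos x t
  have hRne : ρ x t ≠ 0 := hR.ne'
  have hφd : Differentiable ℝ (fun y => φh y t) := (hφx t).differentiable (by norm_num)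
  have hρd : Differentiable ℝ (fun y => ρ y t) := (hρx t).differentiable (by norm_num)
  -- time derivative of the quotient
  have h1 : deriv (fun s => φh x s / ρ x s) t
      = (deriv (fun s => φh x s) t * ρ x t - φh x t * deriv (fun s => ρ x s) t) / ρ x t ^ 2 :=
    deriv_div ((hφt x).differentiable one_ne_zero t) ((hρt x).differentiable one_ne_zero t) hRne
  -- gradient coordinates
  have hgl : ∀ i : Fin n, gradient (fun y => Real.log (ρ y t)) x i
      = fderiv ℝ (fun y => ρ y t) x (EuclideanSpace.single i 1) / ρ x t := by
    intro i
    rw [euclid_grad_apply, (hasFDerivAt_log' (hρd x).hasFDerivAt hRne).fderiv]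
    simp [smul_eq_mul, div_eq_inv_mul]
  have hgψ : ∀ i : Fin n, gradient (fun y => φh y t / ρ y t) x i
      = (φh x t * (-(ρ x t ^ 2)⁻¹)) * fderiv ℝ (fun y => ρ y t) x (EuclideanSpace.single i 1)
        + (ρ x t)⁻¹ * fderiv ℝ (fun y => φh y t) x (EuclideanSpace.single i 1) := by
    intro i
    rw [euclid_grad_apply, (hasFDerivAt_div' (hφd x).hasFDerivAt (hρd x).hasFDerivAt hRne).fderiv]
    simp [smul_eq_mul]
  -- inner product expansion
  have hinner : ⟪b x t - gradient (fun y => Real.log (ρ y t)) x,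
      gradient (fun y => φh y t / ρ y t) x⟫
      = ∑ i : Fin n, ((b x t i
            - fderiv ℝ (fun y => ρ y t) x (EuclideanSpace.single i 1) / ρ x t)
          * ((φh x t * (-(ρ x t ^ 2)⁻¹))
              * fderiv ℝ (fun y => ρ y t) x (EuclideanSpace.single i 1)
            + (ρ x t)⁻¹ * fderiv ℝ (fun y => φh y t) x (EuclideanSpace.single i 1))) := by
    rw [euclid_inner_eq_sum]
    refine Finset.sum_congr rfl fun i _ => ?_
    rw [PiLp.sub_apply, hgl i, hgψ i]
  -- Laplacian of the quotient
  have hlap : lap (fun y => φh y t / ρ y t) x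
      = ∑ i : Fin n,
          ((fderiv ℝ (fun y => fderiv ℝ (fun z => φh z t) y (EuclideanSpace.single i 1)) x
              (EuclideanSpace.single i 1) * ρ x t
            - φh x t * fderiv ℝ (fun y => fderiv ℝ (fun z => ρ z t) y
                (EuclideanSpace.single i 1)) x (EuclideanSpace.single i 1)) / ρ x t ^ 2
          - 2 * fderiv ℝ (fun z => ρ z t) x (EuclideanSpace.single i 1)
            * (fderiv ℝ (fun z => φh z t) x (EuclideanSpace.single i 1) * ρ x t
              - φh x t * fderiv ℝ (fun z => ρ z t) x (EuclideanSpace.single i 1)) / ρ x t ^ 3) := by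
    unfold lap
    exact Finset.sum_congr rfl fun i _ =>
      second_deriv_div (fun z => φh z t) (fun z => ρ z t) (hφx t) (hρx t)
        (fun y => hρpos y t) x (EuclideanSpace.single i 1)
  -- divergence expansions
  have hbt : ContDiff ℝ 1 (fun y => b y t) := hb.comp (contDiff_id.prodMk contDiff_const)
  have hbi : ∀ i : Fin n, Differentiable ℝ (fun y => b y t i) := fun i => by
    exact
      (((EuclideanSpace.proj (𝕜 := ℝ) i).contDiff.comp hbt).differentiable one_ne_zero)
  have hdiv : ∀ (f : EuclideanSpace ℝ (Fin n) → ℝ), Differentiable ℝ f →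
      diver (fun y => f y • b y t) x
      = ∑ i : Fin n, (f x * fderiv ℝ (fun y => b y t i) x (EuclideanSpace.single i 1)
          + b x t i * fderiv ℝ f x (EuclideanSpace.single i 1)) := by
    intro f hfd'
    unfold diver
    refine Finset.sum_congr rfl fun i _ => ?_
    have heq : (fun y => (f y • b y t) i) = fun y => f y * b y t i := by
      funext y; simp [PiLp.smul_apply]
    rw [heq, HasFDerivAt.fderiv (f := fun y => f y * b y t i)
      ((hfd' x).hasFDerivAt.mul ((hbi i) x).hasFDerivAt)]
    simp [smul_eq_mul]
  have E1 := hφpde x t ht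
  have E2 := hρpde x t ht
  rw [hdiv _ hφd] at E1
  rw [hdiv _ hρd] at E2
  unfold lap at E1 E2
  rw [h1, hinner, hlap]
  exact algebra_main (ρ x t) (φh x t) (deriv (fun s => φh x s) t) (deriv (fun s => ρ x s) t)
    hRne
    (fun i => fderiv ℝ (fun z => φh z t) x (EuclideanSpace.single i 1))
    (fun i => fderiv ℝ (fun z => ρ z t) x (EuclideanSpace.single i 1))
    (fun i => fderiv ℝ (fun y => fderiv ℝ (fun z => φh z t) y (EuclideanSpace.single i 1)) x
      (EuclideanSpace.single i 1))
    (fun i => fderiv ℝ (fun y => fderiv ℝ (fun z => ρ z t) y (EuclideanSpace.single i 1)) x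
      (EuclideanSpace.single i 1))
    (fun i => b x t i)
    (fun i => fderiv ℝ (fun y => b y t i) x (EuclideanSpace.single i 1))
    E1 E2
end

section
/- Let Σ₀ be a symmetric positive definite real n×n matrix with positive semidefinite square root Σ₀^{1/2} and let Σ₁ be symmetric positive semidefinite; let Φ be an invertible real n×n matrix and M a symmetric positive definite real n×n matrix. Set S := Σ₀^{1/2} Φᵀ M⁻¹ Φ Σ₀^{1/2} and R := Σ₀^{1/2} Φᵀ M⁻¹ Σ₁ M⁻¹ Φ Σ₀^{1/2} (so R is positive semidefinite). Then, as ε tends to 0 from the right, the matrix Π_ε := Σ₀^{−1/2} [ (ε/2)I + S − ((ε²/4)I + R)^{1/2} ] Σ₀^{−1/2} converges to Π₀ := Σ₀^{−1/2} [ S − R^{1/2} ] Σ₀^{−1/2}, where X^{1/2} denotes the positive semidefinite square root of a positive semidefinite matrix X and Σ₀^{−1/2} the inverse of Σ₀^{1/2}. -/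
open Matrix Filter
open scoped Classical

/-- The positive semidefinite square root of a positive semidefinite real matrix
(junk value `0` on matrices that are not positive semidefinite). -/
noncomputable def psdSqrt {n : ℕ} (X : Matrix (Fin n) (Fin n) ℝ) : Matrix (Fin n) (Fin n) ℝ :=
  if h : X.PosSemidef then
    (h.1.eigenvectorUnitary : Matrix (Fin n) (Fin n) ℝ) *
      diagonal ((↑) ∘ (√·) ∘ h.1.eigenvalues) *
      (star h.1.eigenvectorUnitary : Matrix (Fin n) (Fin n) ℝ)
  else 0

open scoped MatrixOrder

lemma psdSqrt_eq {n : ℕ} {X : Matrix (Fin n) (Fin n) ℝ} (h : X.PosSemidef) :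
    psdSqrt X = CFC.sqrt X := by
  rw [psdSqrt, dif_pos h, CFC.sqrt_eq_real_sqrt X h.nonneg, cfcₙ_eq_cfc, h.1.cfc_eq]
  simp [IsHermitian.cfc, Function.comp_def]

lemma key {n : ℕ} {R : Matrix (Fin n) (Fin n) ℝ} (hR : R.PosSemidef) :
    Filter.Tendsto (fun ε : ℝ => psdSqrt ((ε ^ 2 / 4) • (1 : Matrix (Fin n) (Fin n) ℝ) + R))
      (nhds 0) (nhds (psdSqrt R)) := by
  set U : Matrix (Fin n) (Fin n) ℝ := (hR.1.eigenvectorUnitary : Matrix (Fin n) (Fin n) ℝ)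
  set d : Fin n → ℝ := hR.1.eigenvalues
  have hspec : R = U * diagonal d * star U := by
    have := hR.1.spectral_theorem
    simpa [U, d, Function.comp] using this
  set F : ℝ → Matrix (Fin n) (Fin n) ℝ :=
    fun ε => U * diagonal (fun i => Real.sqrt (d i + ε ^ 2 / 4)) * star U with hF
  have hUU : star U * U = 1 := (Matrix.mem_unitaryGroup_iff').mp hR.1.eigenvectorUnitary.2
  have hUU' : U * star U = 1 := (Matrix.mem_unitaryGroup_iff).mp hR.1.eigenvectorUnitary.2
  have hFpsd : ∀ ε : ℝ, (F ε).PosSemidef := by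
    intro ε
    have h1 : PosSemidef (diagonal (fun i => Real.sqrt (d i + ε ^ 2 / 4))) :=
      posSemidef_diagonal_iff.mpr fun i => Real.sqrt_nonneg _
    simpa [hF, star_eq_conjTranspose] using h1.mul_mul_conjTranspose_same U
  have hFsq : ∀ ε : ℝ, (F ε) ^ 2 = (ε ^ 2 / 4) • (1 : Matrix (Fin n) (Fin n) ℝ) + R := by
    intro ε
    have h2 : F ε * F ε = U * (diagonal (fun i => Real.sqrt (d i + ε ^ 2 / 4)) *
        diagonal (fun i => Real.sqrt (d i + ε ^ 2 / 4))) * star U := by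
      simp only [hF]
      calc (U * diagonal (fun i => Real.sqrt (d i + ε ^ 2 / 4)) * star U) *
          (U * diagonal (fun i => Real.sqrt (d i + ε ^ 2 / 4)) * star U)
          = U * (diagonal (fun i => Real.sqrt (d i + ε ^ 2 / 4)) * ((star U * U) *
            diagonal (fun i => Real.sqrt (d i + ε ^ 2 / 4)))) * star U := by
            simp only [mul_assoc]
        _ = _ := by rw [hUU, one_mul]
    have hd : (fun i => Real.sqrt (d i + ε ^ 2 / 4) * Real.sqrt (d i + ε ^ 2 / 4))
        = fun i => d i + ε ^ 2 / 4 := by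
      funext i
      have hdi : 0 ≤ d i := hR.eigenvalues_nonneg i
      exact Real.mul_self_sqrt (by positivity)
    have hdiag : diagonal (fun i => d i + ε ^ 2 / 4)
        = diagonal d + (ε ^ 2 / 4) • (1 : Matrix (Fin n) (Fin n) ℝ) := by
      ext i j
      rcases eq_or_ne i j with h | h
      · subst h
        simp [Matrix.one_apply_eq]
      · simp [Matrix.diagonal_apply_ne _ h, Matrix.one_apply_ne h]
    rw [pow_two, h2, diagonal_mul_diagonal, hd, hdiag, Matrix.mul_add, Matrix.add_mul,
      ← hspec, Matrix.mul_smul, mul_one, Matrix.smul_mul, hUU', add_comm]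
  have hpsd : ∀ ε : ℝ, ((ε ^ 2 / 4) • (1 : Matrix (Fin n) (Fin n) ℝ) + R).PosSemidef := by
    intro ε
    exact (hFsq ε ▸ (hFpsd ε).pow 2)
  have hval : ∀ ε : ℝ, psdSqrt ((ε ^ 2 / 4) • (1 : Matrix (Fin n) (Fin n) ℝ) + R) = F ε := by
    intro ε
    rw [psdSqrt_eq (hpsd ε)]
    exact ((CFC.sqrt_eq_iff _ _ (hpsd ε).nonneg (hFpsd ε).nonneg).mpr (by rw [← sq]; exact hFsq ε))
  have hval0 : psdSqrt R = F 0 := by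
    rw [psdSqrt_eq hR]
    refine ((CFC.sqrt_eq_iff _ _ hR.nonneg (hFpsd 0).nonneg).mpr ?_)
    rw [← sq, hFsq 0]
    norm_num
  simp only [hval, hval0]
  have hcont : Continuous F := by
    refine (Continuous.matrix_mul (Continuous.matrix_mul continuous_const ?_) continuous_const)
    exact continuous_matrix fun i j => by
      by_cases h : i = j
      · subst h
        simp only [diagonal_apply_eq]
        fun_prop
      · simp only [diagonal_apply_ne _ h]
        exact continuous_const
  exact hcont.tendsto 0

/-- With `S := Σ₀^{1/2} Φᵀ M⁻¹ Φ Σ₀^{1/2}` and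
`R := Σ₀^{1/2} Φᵀ M⁻¹ Σ₁ M⁻¹ Φ Σ₀^{1/2}`, the Schrödinger-bridge feedback gain
`Π_ε = Σ₀^{−1/2}[(ε/2)I + S − ((ε²/4)I + R)^{1/2}]Σ₀^{−1/2}` converges, as `ε → 0⁺`,
to `Π₀ = Σ₀^{−1/2}[S − R^{1/2}]Σ₀^{−1/2}`. -/
theorem schrodinger_bridge_gain_zero_noise_limit {n : ℕ}
    (S0 S1 M Φ : Matrix (Fin n) (Fin n) ℝ)
    (hS0 : S0.PosDef) (hS1 : S1.PosSemidef)
    (hΦ : IsUnit Φ.det) (hM : M.PosDef) :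
    Tendsto
      (fun ε : ℝ => (psdSqrt S0)⁻¹ *
        ((ε / 2) • (1 : Matrix (Fin n) (Fin n) ℝ)
          + psdSqrt S0 * Φᵀ * M⁻¹ * Φ * psdSqrt S0
          - psdSqrt ((ε ^ 2 / 4) • (1 : Matrix (Fin n) (Fin n) ℝ)
              + psdSqrt S0 * Φᵀ * M⁻¹ * S1 * M⁻¹ * Φ * psdSqrt S0)) *
        (psdSqrt S0)⁻¹)
      (nhdsWithin 0 (Set.Ioi 0))
      (nhds ((psdSqrt S0)⁻¹ *
        (psdSqrt S0 * Φᵀ * M⁻¹ * Φ * psdSqrt S0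
          - psdSqrt (psdSqrt S0 * Φᵀ * M⁻¹ * S1 * M⁻¹ * Φ * psdSqrt S0)) *
        (psdSqrt S0)⁻¹)) := by
  set A := psdSqrt S0 with hA
  set S := A * Φᵀ * M⁻¹ * Φ * A
  set R := A * Φᵀ * M⁻¹ * S1 * M⁻¹ * Φ * A with hRdef
  have hAsymm : Aᵀ = A := by
    rw [hA, psdSqrt_eq hS0.posSemidef]
    exact (CFC.sqrt_nonneg S0).posSemidef.1
  have hMt : Mᵀ = M := by
    rw [← Matrix.conjTranspose_eq_transpose_of_trivial]; exact hM.1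
  have hMinv : M⁻¹ᵀ = M⁻¹ := by
    rw [Matrix.transpose_nonsing_inv, hMt]
  have hR : R.PosSemidef := by
    have hct : (M⁻¹ * Φ * A)ᴴ = A * Φᵀ * M⁻¹ := by
      rw [conjTranspose_eq_transpose_of_trivial, Matrix.transpose_mul, Matrix.transpose_mul,
        hAsymm, hMinv, Matrix.mul_assoc]
    have : R = (M⁻¹ * Φ * A)ᴴ * S1 * (M⁻¹ * Φ * A) := by
      rw [hct, hRdef]
      simp only [Matrix.mul_assoc]
    rw [this]
    exact hS1.conjTranspose_mul_mul_same _
  have hkey : Tendsto (fun ε : ℝ => psdSqrt ((ε ^ 2 / 4) • (1 : Matrix (Fin n) (Fin n) ℝ) + R))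
      (nhdsWithin 0 (Set.Ioi 0)) (nhds (psdSqrt R)) :=
    (key hR).mono_left nhdsWithin_le_nhds
  have h2 : Tendsto (fun ε : ℝ => (ε / 2) • (1 : Matrix (Fin n) (Fin n) ℝ))
      (nhdsWithin 0 (Set.Ioi 0)) (nhds 0) := by
    have : Tendsto (fun ε : ℝ => (ε / 2) • (1 : Matrix (Fin n) (Fin n) ℝ)) (nhds 0)
        (nhds ((0 / 2 : ℝ) • (1 : Matrix (Fin n) (Fin n) ℝ))) := by
      exact ((continuous_id.div_const 2).smul continuous_const).tendsto 0
    simpa using this.mono_left nhdsWithin_le_nhds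
  have h3 : Tendsto (fun ε : ℝ => (ε / 2) • (1 : Matrix (Fin n) (Fin n) ℝ) + S)
      (nhdsWithin 0 (Set.Ioi 0)) (nhds S) := by
    simpa using h2.add (tendsto_const_nhds (x := S))
  have := (((h3.sub hkey).const_mul (A⁻¹)).mul_const (A⁻¹))
  exact this
end
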